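/- Let p > 1 and let c₀, k₀ : [0,∞) → ℝ be continuous and nonnegative functions such that ∫₀^T c₀(t) exp[(p−1)∫₀^t k₀(s) ds] dt → ∞ as T → ∞. Then for every w₀ > 0 there is no differentiable function w : [0,∞) → ℝ with w(0) = w₀ and w′(t) = c₀(t) w(t)^p + k₀(t) w(t) for all t ≥ 0. -/
import Mathlib


open MeasureTheory Set Filter

/-- If `p > 1`, `c₀, k₀` are continuous and nonnegative on `[0,∞)` and
`∫₀^T c₀(t) exp[(p−1)∫₀^t k₀] dt → ∞` as `T → ∞`, then for every `w₀ > 0` the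
Cauchy problem `w′ = c₀(t)w^p + k₀(t)w`, `w(0) = w₀` has no global solution. -/
theorem stmt_4 (p : ℝ) (hp : 1 < p) (c₀ k₀ : ℝ → ℝ)
    (hc_cont : ContinuousOn c₀ (Ici 0)) (hc_nonneg : ∀ t ≥ (0:ℝ), 0 ≤ c₀ t)
    (hk_cont : ContinuousOn k₀ (Ici 0)) (hk_nonneg : ∀ t ≥ (0:ℝ), 0 ≤ k₀ t)
    (hdiv : Tendsto
      (fun T => ∫ t in (0:ℝ)..T, c₀ t * Real.exp ((p - 1) * ∫ s in (0:ℝ)..t, k₀ s))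
      atTop atTop) :
    ∀ w₀ : ℝ, 0 < w₀ →
      ¬ ∃ w : ℝ → ℝ, w 0 = w₀ ∧
        ∀ t ≥ (0:ℝ), HasDerivAt w (c₀ t * w t ^ p + k₀ t * w t) t := by
  intro w₀ hw₀ ⟨w, hw0, hw'⟩
  -- extend c₀, k₀ continuously to all of ℝ
  set c : ℝ → ℝ := fun t => c₀ (max t 0) with hc_def
  set k : ℝ → ℝ := fun t => k₀ (max t 0) with hk_def
  have hmax : Continuous (fun t : ℝ => max t 0) := continuous_id.max continuous_const
  have hmax_mem : ∀ t : ℝ, max t 0 ∈ Ici (0:ℝ) := fun t => le_max_right t 0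
  have hc : Continuous c := hc_cont.comp_continuous hmax hmax_mem
  have hk : Continuous k := hk_cont.comp_continuous hmax hmax_mem
  have hcnn : ∀ t : ℝ, 0 ≤ c t := fun t => hc_nonneg _ (le_max_right t 0)
  have hknn : ∀ t : ℝ, 0 ≤ k t := fun t => hk_nonneg _ (le_max_right t 0)
  have hceq : ∀ t ≥ (0:ℝ), c t = c₀ t := fun t ht => by simp [hc_def, max_eq_left ht]
  have hkeq : ∀ t ≥ (0:ℝ), k t = k₀ t := fun t ht => by simp [hk_def, max_eq_left ht]
  have hw'' : ∀ t ≥ (0:ℝ), HasDerivAt w (c t * w t ^ p + k t * w t) t := fun t ht => by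
    rw [hceq t ht, hkeq t ht]; exact hw' t ht
  have hwcont : ∀ t ≥ (0:ℝ), ContinuousAt w t := fun t ht => (hw'' t ht).continuousAt
  -- positivity of w on [0, ∞)
  have hwpos : ∀ t ≥ (0:ℝ), 0 < w t := by
    intro t₁ ht₁
    by_contra hle
    push_neg at hle
    set Z : Set ℝ := {s | s ∈ Icc 0 t₁ ∧ w s ≤ 0} with hZ_def
    have hZne : Z.Nonempty := ⟨t₁, ⟨ht₁, le_refl t₁⟩, hle⟩
    have hZbdd : BddBelow Z := ⟨0, fun s hs => hs.1.1⟩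
    set t₀ : ℝ := sInf Z with ht₀_def
    have ht₀0 : 0 ≤ t₀ := le_csInf hZne fun s hs => hs.1.1
    have ht₀1 : t₀ ≤ t₁ := csInf_le hZbdd ⟨⟨ht₁, le_refl t₁⟩, hle⟩
    -- w t₀ ≤ 0
    have hwt₀ : w t₀ ≤ 0 := by
      by_contra hpos
      push_neg at hpos
      have := (hwcont t₀ ht₀0).eventually (eventually_gt_nhds hpos)
      rcases Metric.eventually_nhds_iff.1 this with ⟨ε, hε, hball⟩
      obtain ⟨z, hz, hzlt⟩ := exists_lt_of_csInf_lt hZne (by linarith : sInf Z < t₀ + ε)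
      have hz0 : t₀ ≤ z := csInf_le hZbdd hz
      have : 0 < w z := hball (by rw [Real.dist_eq]; rw [abs_lt]; constructor <;> linarith)
      linarith [hz.2]
    -- w > 0 on [0, t₀)
    have hwpos' : ∀ s, 0 ≤ s → s < t₀ → 0 < w s := by
      intro s hs hst
      by_contra h
      push_neg at h
      exact absurd (csInf_le hZbdd ⟨⟨hs, le_trans hst.le ht₀1⟩, h⟩) (not_le.2 hst)
    -- w is monotone on [0, t₀]
    have hmono : MonotoneOn w (Icc 0 t₀) := by
      apply monotoneOn_of_deriv_nonneg (convex_Icc 0 t₀)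
      · intro s hs; exact (hwcont s hs.1).continuousWithinAt
      · intro s hs
        rw [interior_Icc] at hs
        exact ((hw'' s hs.1.le).differentiableAt).differentiableWithinAt
      · intro s hs
        rw [interior_Icc] at hs
        rw [(hw'' s hs.1.le).deriv]
        have hws : 0 < w s := hwpos' s hs.1.le hs.2
        have : (0:ℝ) ≤ w s ^ p := Real.rpow_nonneg hws.le p
        have := hcnn s; have := hknn s
        positivity
    have h0t₀ : (0:ℝ) ∈ Icc (0:ℝ) t₀ := ⟨le_refl 0, ht₀0⟩
    have ht₀t₀ : t₀ ∈ Icc (0:ℝ) t₀ := ⟨ht₀0, le_refl t₀⟩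
    have := hmono h0t₀ ht₀t₀ ht₀0
    rw [hw0] at this
    linarith
  -- K t = ∫₀ᵗ k, with derivative k
  set K : ℝ → ℝ := fun t => ∫ s in (0:ℝ)..t, k s with hK_def
  have hK : ∀ t : ℝ, HasDerivAt K (k t) t := fun t =>
    intervalIntegral.integral_hasDerivAt_right (hk.intervalIntegrable 0 t)
      (hk.stronglyMeasurableAtFilter _ _) hk.continuousAt
  have hKcont : Continuous K := by
    apply continuous_iff_continuousAt.2; intro t; exact (hK t).continuousAt
  -- g and its integral G
  set g : ℝ → ℝ := fun t => c t * Real.exp ((p - 1) * K t) with hg_def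
  have hgcont : Continuous g := hc.mul ((continuous_const.mul hKcont).rexp)
  set G : ℝ → ℝ := fun T => ∫ t in (0:ℝ)..T, g t with hG_def
  have hG : ∀ t : ℝ, HasDerivAt G (g t) t := fun t =>
    intervalIntegral.integral_hasDerivAt_right (hgcont.intervalIntegrable 0 t)
      (hgcont.stronglyMeasurableAtFilter _ _) hgcont.continuousAt
  -- the Lyapunov-type function F
  set φ : ℝ → ℝ := fun t => w t ^ (1 - p) * Real.exp ((p - 1) * K t) with hφ_def
  set F : ℝ → ℝ := fun t => φ t + (p - 1) * G t with hF_def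
  have hF' : ∀ t ≥ (0:ℝ), HasDerivAt F 0 t := by
    intro t ht
    have hwt : 0 < w t := hwpos t ht
    have hA : HasDerivAt (fun s => w s ^ (1 - p))
        ((c t * w t ^ p + k t * w t) * (1 - p) * w t ^ (1 - p - 1)) t :=
      (hw'' t ht).rpow_const (Or.inl hwt.ne')
    have hE : HasDerivAt (fun s => Real.exp ((p - 1) * K s))
        (Real.exp ((p - 1) * K t) * ((p - 1) * k t)) t := by
      have := (((hK t).const_mul (p - 1)).exp)
      simpa [mul_comm] using this
    have hφ' : HasDerivAt φ
        (((c t * w t ^ p + k t * w t) * (1 - p) * w t ^ (1 - p - 1)) *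
            Real.exp ((p - 1) * K t) +
          w t ^ (1 - p) * (Real.exp ((p - 1) * K t) * ((p - 1) * k t))) t := hA.mul hE
    have hsum := hφ'.add ((hG t).const_mul (p - 1))
    have key : ((c t * w t ^ p + k t * w t) * (1 - p) * w t ^ (1 - p - 1)) *
            Real.exp ((p - 1) * K t) +
          w t ^ (1 - p) * (Real.exp ((p - 1) * K t) * ((p - 1) * k t)) +
          (p - 1) * g t = 0 := by
      have e1 : w t ^ p * w t ^ (1 - p - 1) = 1 := by
        rw [← Real.rpow_add hwt]; norm_num
      have e2 : w t * w t ^ (1 - p - 1) = w t ^ (1 - p) := by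
        nth_rewrite 1 [← Real.rpow_one (w t)]
        rw [← Real.rpow_add hwt]; ring_nf
      have : g t = c t * Real.exp ((p - 1) * K t) := rfl
      rw [this]
      linear_combination ((1 - p) * c t * Real.exp ((p - 1) * K t)) * e1 +
        ((1 - p) * k t * Real.exp ((p - 1) * K t)) * e2
    rw [key] at hsum
    exact hsum
  -- F is constant on [0, ∞)
  have hFconst : ∀ T ≥ (0:ℝ), F T = F 0 := by
    intro T hT
    have := constant_of_has_deriv_right_zero (f := F) (a := 0) (b := T)
      (fun s hs => (hF' s hs.1).continuousAt.continuousWithinAt)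
      (fun s hs => (hF' s hs.1).hasDerivWithinAt)
    exact this T ⟨hT, le_refl T⟩
  have hK0 : K 0 = 0 := intervalIntegral.integral_same
  have hG0 : G 0 = 0 := intervalIntegral.integral_same
  have hF0 : F 0 = w₀ ^ (1 - p) := by
    simp [hF_def, hφ_def, hG0, hK0, hw0]
  -- bound on G
  have hGbound : ∀ T ≥ (0:ℝ), G T ≤ w₀ ^ (1 - p) / (p - 1) := by
    intro T hT
    have h1 : φ T + (p - 1) * G T = w₀ ^ (1 - p) := by
      have := hFconst T hT; rw [hF0] at this; exact this
    have hφpos : 0 < φ T :=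
      mul_pos (Real.rpow_pos_of_pos (hwpos T hT) _) (Real.exp_pos _)
    rw [le_div_iff₀ (by linarith : (0:ℝ) < p - 1)]
    linarith
  -- the original integral equals G on [0, ∞)
  have hInt : ∀ T ≥ (0:ℝ),
      (∫ t in (0:ℝ)..T, c₀ t * Real.exp ((p - 1) * ∫ s in (0:ℝ)..t, k₀ s)) = G T := by
    intro T hT
    apply intervalIntegral.integral_congr
    intro t ht
    rw [uIcc_of_le hT] at ht
    have ht0 : (0:ℝ) ≤ t := ht.1
    have hKt : (∫ s in (0:ℝ)..t, k₀ s) = K t := by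
      apply intervalIntegral.integral_congr
      intro s hs
      rw [uIcc_of_le ht0] at hs
      exact (hkeq s hs.1).symm
    show c₀ t * Real.exp ((p - 1) * ∫ s in (0:ℝ)..t, k₀ s) = g t
    rw [hKt, ← hceq t ht0]
  -- contradiction with divergence
  have hev : ∀ᶠ T in atTop,
      (∫ t in (0:ℝ)..T, c₀ t * Real.exp ((p - 1) * ∫ s in (0:ℝ)..t, k₀ s)) >
        w₀ ^ (1 - p) / (p - 1) :=
    hdiv.eventually_gt_atTop _
  obtain ⟨T, hT0, hTgt⟩ := ((eventually_ge_atTop (0:ℝ)).and hev).exists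
  rw [hInt T hT0] at hTgt
  exact absurd (hGbound T hT0) (not_le.2 hTgt)
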